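/- The Bose–Einstein integral evaluates as ∫₀^∞ x³/(eˣ − 1) dx = π⁴/15. -/

import Mathlib

open Real MeasureTheory

open Complex in
lemma bose_aux : HasSum (fun n : ℕ => Complex.Gamma 4 * (if n = 0 then 0 else 1) / (n : ℂ) ^ (4 : ℂ))
    (mellin (fun t : ℝ => ((1 / (Real.exp t - 1) : ℝ) : ℂ)) 4) := by
  apply hasSum_mellin (p := fun n : ℕ => (n : ℝ))
  · intro n
    rcases eq_or_ne n 0 with h | h
    · exact Or.inl (by simp [h])
    · exact Or.inr (by positivity)
  · norm_num
  · intro t ht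
    simp only [Set.mem_Ioi] at ht
    have het : 1 < Real.exp t := by
      rw [← Real.exp_zero]; exact Real.exp_lt_exp.mpr ht
    have hr : |Real.exp (-t)| < 1 := by
      rw [abs_of_pos (Real.exp_pos _), Real.exp_neg]
      exact inv_lt_one_of_one_lt₀ het
    have h0 := hasSum_geometric_of_abs_lt_one hr
    have h1 : HasSum (fun n : ℕ => Real.exp (-t) ^ (n + 1))
        (Real.exp (-t) * (1 - Real.exp (-t))⁻¹) := by
      simpa [pow_succ, mul_comm, one_div] using h0.mul_left (Real.exp (-t))
    have h2 : HasSum (fun n : ℕ => Real.exp (-t) ^ (n + 1)) (1 / (Real.exp t - 1)) := by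
      convert h1 using 1
      have he : Real.exp t ≠ 0 := (Real.exp_pos t).ne'
      have h3 : Real.exp t - 1 ≠ 0 := sub_ne_zero.mpr het.ne'
      rw [Real.exp_neg]
      field_simp
    set g : ℕ → ℝ := fun n => if n = 0 then 0 else Real.exp (-(n : ℝ) * t) with hg
    have h4 : HasSum g (1 / (Real.exp t - 1)) := by
      refine (hasSum_nat_add_iff' 1).mp ?_
      have hsum0 : ∑ i ∈ Finset.range 1, g i = 0 := by simp [hg]
      rw [hsum0, sub_zero]
      convert h2 using 2 with n
      · rfl
      simp only [hg, Nat.succ_ne_zero, if_false]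
      rw [← Real.exp_nat_mul]
      congr 1
      push_cast
      ring
    have h5 := Complex.hasSum_ofReal.mpr h4
    convert h5 using 2 with n
    rcases eq_or_ne n 0 with h | h <;> simp [hg, h]
  · refine Summable.of_nonneg_of_le (fun n => by positivity) (fun n => ?_)
      ((Real.summable_one_div_nat_rpow (p := (4 : ℂ).re)).mpr (by norm_num))
    rcases eq_or_ne n 0 with h | h <;> simp [h]

theorem bose_einstein_integral :
    ∫ x in Set.Ioi (0 : ℝ), x ^ 3 / (Real.exp x - 1) = π ^ 4 / 15 := by
  have hG : Complex.Gamma 4 = 6 := by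
    simpa [Nat.factorial] using Complex.Gamma_nat_eq_factorial 3
  have h6 : HasSum (fun n : ℕ => Complex.Gamma 4 * (if n = 0 then 0 else 1) / (n : ℂ) ^ (4 : ℂ))
      (((π ^ 4 / 15 : ℝ) : ℂ)) := by
    have h := (hasSum_zeta_four.mul_left 6)
    have h' := Complex.hasSum_ofReal.mpr h
    convert h' using 2 with n
    · rcases eq_or_ne n 0 with h0 | h0
      · simp [h0, Complex.zero_cpow (by norm_num : (4:ℂ) ≠ 0)]
      · rw [hG, if_neg h0, mul_one, show (4 : ℂ) = ((4 : ℕ) : ℂ) by norm_num,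
          Complex.cpow_natCast]
        push_cast
        ring
    · push_cast
      ring
  have hm : mellin (fun t : ℝ => ((1 / (Real.exp t - 1) : ℝ) : ℂ)) 4 = ((π ^ 4 / 15 : ℝ) : ℂ) :=
    bose_aux.unique h6
  have hI : ((∫ x in Set.Ioi (0 : ℝ), x ^ 3 / (Real.exp x - 1) : ℝ) : ℂ)
      = mellin (fun t : ℝ => ((1 / (Real.exp t - 1) : ℝ) : ℂ)) 4 := by
    rw [mellin]
    have : ∫ t in Set.Ioi (0:ℝ), (t : ℂ) ^ ((4:ℂ) - 1) • ((1 / (Real.exp t - 1) : ℝ) : ℂ)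
        = ∫ t in Set.Ioi (0:ℝ), ((t ^ 3 / (Real.exp t - 1) : ℝ) : ℂ) := by
      refine setIntegral_congr_fun measurableSet_Ioi fun t ht => ?_
      rw [smul_eq_mul, show (4 : ℂ) - 1 = ((3 : ℕ) : ℂ) by norm_num, Complex.cpow_natCast]
      push_cast
      ring
    rw [this]
    exact (integral_ofReal (𝕜 := ℂ)).symm
  exact Complex.ofReal_injective (hI.trans hm)
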